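/- The LZ77 parse (without overlaps) of the length-n prefix of the Thue-Morse sequence has O(log n) phrases. -/

import Mathlib

variable {α : Type*} [DecidableEq α]

/-- The length of the next greedy LZ77 phrase without overlaps: the largest
`L` such that the length-`L` prefix of the remainder `t` occurs as a substring
of the already-parsed prefix `p` (`0` if there is none). -/
def lzNoLen (p t : List α) : ℕ :=
  Nat.findGreatest (fun L => 0 < L ∧ (t.take L) <:+: p) t.length

/-- Greedy LZ77 without overlaps: `p` is the already parsed prefix, `r` the
remainder. Each phrase is the longest nonempty prefix of `r` occurring
entirely earlier, or else a single fresh symbol. -/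
def lzNoAux (p r : List α) : List (List α) :=
  match r with
  | [] => []
  | a :: r' =>
    if hL : lzNoLen p (a :: r') = 0 then [a] :: lzNoAux (p ++ [a]) r'
    else ((a :: r').take (lzNoLen p (a :: r'))) ::
      lzNoAux (p ++ (a :: r').take (lzNoLen p (a :: r'))) ((a :: r').drop (lzNoLen p (a :: r')))
termination_by r.length
decreasing_by
  · simp
  · have := Nat.pos_of_ne_zero hL
    simp only [List.length_drop, List.length_cons]
    omega

/-- The greedy LZ77 parse without overlaps. -/
def lzNo (s : List α) : List (List α) := lzNoAux [] s

/-- The length of the next greedy LZ77 phrase with overlaps: the largest `L`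
such that the length-`L` prefix of the remainder `t` can be copied from a
source occurrence starting strictly before position `|p|` (possibly
overlapping the phrase itself). -/
def lzOvLen (p t : List α) : ℕ :=
  Nat.findGreatest
    (fun L => 0 < L ∧ ∃ j < p.length, ((p ++ t.take L).drop j).take L = t.take L)
    t.length

/-- Greedy LZ77 with overlaps between phrases and their sources. -/
def lzOvAux (p r : List α) : List (List α) :=
  match r with
  | [] => []
  | a :: r' =>
    if hL : lzOvLen p (a :: r') = 0 then [a] :: lzOvAux (p ++ [a]) r'
    else ((a :: r').take (lzOvLen p (a :: r'))) ::
      lzOvAux (p ++ (a :: r').take (lzOvLen p (a :: r'))) ((a :: r').drop (lzOvLen p (a :: r')))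
termination_by r.length
decreasing_by
  · simp
  · have := Nat.pos_of_ne_zero hL
    simp only [List.length_drop, List.length_cons]
    omega

/-- The greedy LZ77 parse with overlaps. -/
def lzOv (s : List α) : List (List α) := lzOvAux [] s


/-- The Thue-Morse sequence: parity of the number of 1 bits of `n`. -/
def thueMorse (n : ℕ) : Fin 2 := Fin.ofNat 2 (n.bits.count true)

/-- The prefix of length `n` of the Thue-Morse sequence. -/
def tmPrefix (n : ℕ) : List (Fin 2) := (List.range n).map thueMorse

/-! ### Auxiliary development for the Thue–Morse LZ77 bound -/

section TMAux

lemma tm_even (n : ℕ) : thueMorse (2*n) = thueMorse n := by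
  rcases Nat.eq_zero_or_pos n with rfl | h
  · rfl
  · unfold thueMorse; rw [Nat.bit0_bits n h.ne']; simp [List.count_cons]

lemma tm_odd (n : ℕ) : thueMorse (2*n+1) = thueMorse n + 1 := by
  unfold thueMorse; rw [Nat.bit1_bits]; simp [List.count_cons]
  apply Fin.ext; simp [Fin.val_add, Fin.val_ofNat, Nat.add_mod]

lemma tm0 : thueMorse 0 = 0 := by simp [thueMorse]
lemma tm1 : thueMorse 1 = 1 := by rw [show thueMorse 1 = thueMorse (2*0+1) from rfl, tm_odd, tm0]; rfl
lemma tm2 : thueMorse 2 = 1 := by rw [show thueMorse 2 = thueMorse (2*1) from rfl, tm_even, tm1]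
lemma tm3 : thueMorse 3 = 0 := by rw [show thueMorse 3 = thueMorse (2*1+1) from rfl, tm_odd, tm1]; rfl
lemma tm5 : thueMorse 5 = 0 := by rw [show thueMorse 5 = thueMorse (2*2+1) from rfl, tm_odd, tm2]; rfl
lemma tm6 : thueMorse 6 = 0 := by rw [show thueMorse 6 = thueMorse (2*3) from rfl, tm_even, tm3]

/-- Every Thue–Morse factor of length `L` starting at position `m` with
`17 L ≤ m + 35`, `8 ≤ m`, occurs earlier (entirely inside `[0, m)`). -/
lemma tm_occ : ∀ L : ℕ, ∀ m : ℕ, 1 ≤ L → 17*L ≤ m + 35 → 8 ≤ m →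
    ∃ j, j + L ≤ m ∧ ∀ i < L, thueMorse (j+i) = thueMorse (m+i) := by
  intro L
  induction L using Nat.strong_induction_on with
  | _ L IH =>
  intro m hL1 h17 h8
  rcases L with _ | _ | _ | L
  · omega
  · obtain h | h : thueMorse m = 0 ∨ thueMorse m = 1 := by omega
    · exact ⟨0, by omega, by intro i hi; interval_cases i; simp [tm0, h]⟩
    · exact ⟨1, by omega, by intro i hi; interval_cases i; simp [tm1, h]⟩
  · obtain h0 | h0 : thueMorse m = 0 ∨ thueMorse m = 1 := by omega
    · obtain h1 | h1 : thueMorse (m+1) = 0 ∨ thueMorse (m+1) = 1 := by omega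
      · exact ⟨5, by omega, by intro i hi; interval_cases i <;> simp [tm5, tm6, h0, h1]⟩
      · exact ⟨0, by omega, by intro i hi; interval_cases i <;> simp [tm0, tm1, h0, h1]⟩
    · obtain h1 | h1 : thueMorse (m+1) = 0 ∨ thueMorse (m+1) = 1 := by omega
      · exact ⟨2, by omega, by intro i hi; interval_cases i <;> simp [tm2, tm3, h0, h1]⟩
      · exact ⟨1, by omega, by intro i hi; interval_cases i <;> simp [tm1, tm2, h0, h1]⟩
  · have hrec := IH ((L+3)/2 + 1) (by omega) (m/2) (by omega) (by omega) (by omega)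
    obtain ⟨j0, hj0, hmt⟩ := hrec
    refine ⟨2*j0 + m % 2, by omega, ?_⟩
    intro i hi
    have hd4 : (m+i)/2 - m/2 < (L+3)/2 + 1 := by omega
    have key := hmt ((m+i)/2 - m/2) hd4
    rcases (by omega : (m+i) % 2 = 0 ∨ (m+i) % 2 = 1) with hr | hr
    · have e2 : m + i = 2*(m/2 + ((m+i)/2 - m/2)) := by omega
      have e3 : 2*j0 + m % 2 + i = 2*(j0 + ((m+i)/2 - m/2)) := by omega
      rw [e2, e3, tm_even, tm_even]; exact key
    · have e2 : m + i = 2*(m/2 + ((m+i)/2 - m/2)) + 1 := by omega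
      have e3 : 2*j0 + m % 2 + i = 2*(j0 + ((m+i)/2 - m/2)) + 1 := by omega
      rw [e2, e3, tm_odd, tm_odd, key]

/-- The Thue–Morse segment `[m, m+k)`. -/
def tmSeg (m k : ℕ) : List (Fin 2) := (List.range' m k).map thueMorse

lemma length_tmSeg (m k : ℕ) : (tmSeg m k).length = k := by simp [tmSeg]

lemma tmSeg_append (a b c : ℕ) : tmSeg a b ++ tmSeg (a+b) c = tmSeg a (b+c) := by
  unfold tmSeg
  rw [← List.map_append]
  congr 1
  have := List.range'_append (s := a) (m := b) (n := c) (step := 1)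
  simpa [Nat.add_comm c b] using this

lemma tmPrefix_eq (n : ℕ) : tmPrefix n = tmSeg 0 n := by
  simp [tmPrefix, tmSeg, List.range_eq_range']

lemma tmSeg_split {L k : ℕ} (m : ℕ) (h : L ≤ k) :
    tmSeg m k = tmSeg m L ++ tmSeg (m+L) (k-L) := by
  rw [tmSeg_append]; congr 1; omega

lemma tmSeg_take {L k : ℕ} (m : ℕ) (h : L ≤ k) : (tmSeg m k).take L = tmSeg m L := by
  rw [tmSeg_split m h, List.take_left' (length_tmSeg m L)]

lemma tmSeg_drop {L k : ℕ} (m : ℕ) (h : L ≤ k) :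
    (tmSeg m k).drop L = tmSeg (m+L) (k-L) := by
  rw [tmSeg_split m h, List.drop_left' (length_tmSeg m L)]

lemma tmSeg_cons (m k : ℕ) (h : 1 ≤ k) :
    tmSeg m k = thueMorse m :: tmSeg (m+1) (k-1) := by
  rw [tmSeg_split m h]
  rfl

lemma tmSeg_eq_of_pointwise {j m L : ℕ}
    (h : ∀ i < L, thueMorse (j+i) = thueMorse (m+i)) : tmSeg j L = tmSeg m L := by
  apply List.ext_getElem (by simp [length_tmSeg])
  intro i h1 h2
  simp only [tmSeg, List.getElem_map, List.getElem_range', one_mul]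
  exact h i (by simpa [length_tmSeg] using h1)

lemma tmSeg_infix {m L : ℕ} (h1 : 1 ≤ L) (h17 : 17*L ≤ m+35) (h8 : 8 ≤ m) :
    tmSeg m L <:+: tmPrefix m := by
  obtain ⟨j, hjm, hmatch⟩ := tm_occ L m h1 h17 h8
  rw [tmPrefix_eq, ← tmSeg_eq_of_pointwise hmatch]
  refine ⟨tmSeg 0 j, tmSeg (j+L) (m-(j+L)), ?_⟩
  have e1 := tmSeg_append 0 j L
  have e2 := tmSeg_append 0 (j+L) (m-(j+L))
  simp only [Nat.zero_add] at e1 e2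
  rw [e1, e2]
  congr 1
  omega

lemma lzNoLen_le (p t : List (Fin 2)) : lzNoLen p t ≤ t.length :=
  Nat.findGreatest_le _

lemma le_lzNoLen (p t : List (Fin 2)) {L : ℕ} (hL : L ≤ t.length) (h0 : 0 < L)
    (h : t.take L <:+: p) : L ≤ lzNoLen p t :=
  Nat.le_findGreatest hL ⟨h0, h⟩

lemma lzLen_lower {m k : ℕ} (h8 : 8 ≤ m) (hk : 1 ≤ k) :
    min k ((m+35)/17) ≤ lzNoLen (tmPrefix m) (tmSeg m k) := by
  apply le_lzNoLen
  · rw [length_tmSeg]; exact min_le_left _ _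
  · have : 2 ≤ (m+35)/17 := by omega
    omega
  · rw [tmSeg_take m (min_le_left _ _)]
    exact tmSeg_infix (by omega) (by omega) h8

lemma tmPrefix_append_seg (m L : ℕ) : tmPrefix m ++ tmSeg m L = tmPrefix (m+L) := by
  rw [tmPrefix_eq, tmPrefix_eq]
  have := tmSeg_append 0 m L
  simpa using this

lemma tmSeg_one (m : ℕ) : tmSeg m 1 = [thueMorse m] := by
  rw [tmSeg_cons m 1 le_rfl]; rfl

lemma tmPrefix_succ (m : ℕ) : tmPrefix m ++ [thueMorse m] = tmPrefix (m+1) := by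
  rw [← tmSeg_one, tmPrefix_append_seg]

lemma lzNoAux_nil (p : List (Fin 2)) : lzNoAux p [] = [] := by
  rw [lzNoAux]

/-- The key counting bound: starting from the parsed prefix `tmPrefix m` with
remainder `tmSeg m k`, the number `z` of phrases satisfies
`(m+10) * 18^z ≤ 18 * (m+k+10) * 17^z`. -/
lemma tm_countB : ∀ k m : ℕ,
    (m+10) * 18 ^ (lzNoAux (tmPrefix m) (tmSeg m k)).length
      ≤ 18 * (m + k + 10) * 17 ^ (lzNoAux (tmPrefix m) (tmSeg m k)).length := by
  intro k
  induction k using Nat.strong_induction_on with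
  | _ k IH =>
  intro m
  rcases Nat.eq_zero_or_pos k with rfl | hk
  · rw [show tmSeg m 0 = [] from rfl, lzNoAux_nil]
    simp only [List.length_nil, pow_zero, mul_one]
    omega
  · have hcons := tmSeg_cons m k hk
    rw [hcons, lzNoAux, ← hcons]
    by_cases h0 : lzNoLen (tmPrefix m) (tmSeg m k) = 0
    · rw [dif_pos h0]
      have hm7 : m < 8 := by
        by_contra hm
        push_neg at hm
        have := lzLen_lower hm hk
        have h2 : 2 ≤ (m+35)/17 := by omega
        omega
      have hshow : [thueMorse m] = (tmSeg m k).take 1 := by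
        rw [tmSeg_take m hk, tmSeg_cons m 1 le_rfl]; rfl
      rw [show tmPrefix m ++ [thueMorse m] = tmPrefix (m+1) from tmPrefix_succ m]
      have IH1 := IH (k-1) (by omega) (m+1)
      rw [show m+1+(k-1)+10 = m+k+10 by omega] at IH1
      set z := (lzNoAux (tmPrefix (m+1)) (tmSeg (m+1) (k-1))).length with hz
      rw [List.length_cons]
      have step : 18*(m+10) ≤ 17*(m+1+10) := by omega
      calc (m+10) * 18 ^ (z+1) = (18*(m+10)) * 18^z := by ring
        _ ≤ (17*(m+1+10)) * 18^z := Nat.mul_le_mul_right _ step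
        _ = 17 * ((m+1+10) * 18^z) := by ring
        _ ≤ 17 * (18*(m+k+10) * 17^z) := Nat.mul_le_mul_left _ IH1
        _ = 18*(m+k+10) * 17 ^ (z+1) := by ring
    · rw [dif_neg h0]
      obtain ⟨L, hLdef⟩ : ∃ L', lzNoLen (tmPrefix m) (tmSeg m k) = L' := ⟨_, rfl⟩
      rw [hLdef] at h0 ⊢
      have hL1 : 1 ≤ L := Nat.pos_of_ne_zero h0
      have hLk : L ≤ k := by
        have := lzNoLen_le (tmPrefix m) (tmSeg m k)
        rw [length_tmSeg, hLdef] at this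
        exact this
      rw [tmSeg_take m hLk, tmSeg_drop m hLk, tmPrefix_append_seg m L]
      rcases eq_or_lt_of_le hLk with rfl | hLlt
      · rw [show L - L = 0 from by omega, show tmSeg (m+L) 0 = [] from rfl,
          lzNoAux_nil]
        simp only [List.length_cons, List.length_nil, Nat.zero_add, pow_one]
        nlinarith
      · have hstep : m + 10 ≤ 17*L := by
          rcases le_or_gt 8 m with h8 | h8
          · have := lzLen_lower h8 hk
            rw [hLdef] at this
            omega
          · omega
        have IH1 := IH (k-L) (by omega) (m+L)
        rw [show m+L+(k-L)+10 = m+k+10 by omega] at IH1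
        rw [List.length_cons]
        set z := (lzNoAux (tmPrefix (m+L)) (tmSeg (m+L) (k-L))).length
        calc (m+10) * 18 ^ (z+1) = (18*(m+10)) * 18^z := by ring
          _ ≤ (17*(m+L+10)) * 18^z := Nat.mul_le_mul_right _ (by omega)
          _ = 17 * ((m+L+10) * 18^z) := by ring
          _ ≤ 17 * (18*(m+k+10) * 17^z) := Nat.mul_le_mul_left _ IH1
          _ = 18*(m+k+10) * 17 ^ (z+1) := by ring

lemma tm_count_main (n : ℕ) :
    10 * 18 ^ (lzNo (tmPrefix n)).length ≤ 18 * (n+10) * 17 ^ (lzNo (tmPrefix n)).length := by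
  have h := tm_countB n 0
  have h1 : tmPrefix 0 = ([] : List (Fin 2)) := rfl
  rw [h1, ← tmPrefix_eq] at h
  simpa [lzNo] using h

end TMAux

/-- the greedy LZ77 parse without overlaps of the length-`n`
prefix of the Thue–Morse sequence has `O(log n)` phrases. -/
theorem lzNo_tmPrefix_le_log :
    ∃ c : ℝ, 0 < c ∧ ∀ n : ℕ, 2 ≤ n →
      ((lzNo (tmPrefix n)).length : ℝ) ≤ c * Real.log n := by
  have hB : (0:ℝ) < Real.log (18/17) := Real.log_pos (by norm_num)
  have hA : (0:ℝ) < Real.log 11 / Real.log 2 + 1 := by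
    have := Real.log_pos (by norm_num : (1:ℝ) < 11)
    have := Real.log_pos (by norm_num : (1:ℝ) < 2)
    positivity
  refine ⟨(Real.log 11 / Real.log 2 + 1) / Real.log (18/17), div_pos hA hB, ?_⟩
  intro n hn
  set z := (lzNo (tmPrefix n)).length with hzdef
  have h := tm_count_main n
  have hR : (10:ℝ) * 18^z ≤ 18*((n:ℝ)+10)*17^z := by exact_mod_cast h
  have h17 : (0:ℝ) < 17^z := by positivity
  have hn2 : (2:ℝ) ≤ (n:ℝ) := by exact_mod_cast hn
  have h1 : ((18:ℝ)/17)^z ≤ 11 * n := by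
    rw [div_pow, div_le_iff₀ h17]
    nlinarith [mul_le_mul_of_nonneg_right
      (show ((n:ℝ)+10) ≤ 6*n by linarith) (le_of_lt h17)]
  have hz : (z:ℝ) * Real.log (18/17) ≤ Real.log (11*n) := by
    rw [← Real.log_pow]
    exact Real.log_le_log (by positivity) h1
  have hlogmul : Real.log (11*(n:ℝ)) = Real.log 11 + Real.log n :=
    Real.log_mul (by norm_num) (by positivity)
  have hln2 : Real.log 2 ≤ Real.log n := Real.log_le_log (by norm_num) hn2
  have hl2pos : (0:ℝ) < Real.log 2 := Real.log_pos (by norm_num)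
  have hlognpos : (0:ℝ) < Real.log n := lt_of_lt_of_le hl2pos hln2
  have h11 : Real.log 11 ≤ (Real.log 11 / Real.log 2) * Real.log n := by
    rw [div_mul_eq_mul_div, le_div_iff₀ hl2pos]
    have h11pos : (0:ℝ) ≤ Real.log 11 := Real.log_nonneg (by norm_num)
    nlinarith
  rw [div_mul_eq_mul_div, le_div_iff₀ hB]
  calc (z:ℝ) * Real.log (18/17) ≤ Real.log (11*n) := hz
    _ = Real.log 11 + Real.log n := hlogmul
    _ ≤ (Real.log 11 / Real.log 2) * Real.log n + Real.log n := by linarith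
    _ = (Real.log 11 / Real.log 2 + 1) * Real.log n := by ring
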